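/- There exists a constant C₃' > 0, depending only on J, such that |∂v₀|² ≤ C₃' r⁻² at every point with ρ > 0; consequently |∂ ln X₀|² ≤ C₃ ρ⁻² with C₃ = C₃' + 4 at every point with ρ > 0. -/

import Mathlib

open Real MeasureTheory

noncomputable section

/-- Partial derivative with respect to ρ (the first coordinate) of an
axisymmetric function, viewed as a function of (ρ, z). -/
def pdR (f : ℝ × ℝ → ℝ) (p : ℝ × ℝ) : ℝ := fderiv ℝ f p (1, 0)

/-- Partial derivative with respect to z (the second coordinate). -/
def pdZ (f : ℝ × ℝ → ℝ) (p : ℝ × ℝ) : ℝ := fderiv ℝ f p (0, 1)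

/-- |∂f|² = f_{,ρ}² + f_{,z}². -/
def gradSq (f : ℝ × ℝ → ℝ) (p : ℝ × ℝ) : ℝ := (pdR f p) ^ 2 + (pdZ f p) ^ 2

/-- ∂f·∂g = f_{,ρ} g_{,ρ} + f_{,z} g_{,z}. -/
def gradDot (f g : ℝ × ℝ → ℝ) (p : ℝ × ℝ) : ℝ :=
  pdR f p * pdR g p + pdZ f p * pdZ g p

/-- The flat Laplacian of ℝ³ acting on axisymmetric functions:
Δf = f_{,ρρ} + ρ⁻¹ f_{,ρ} + f_{,zz}. -/
def lap (f : ℝ × ℝ → ℝ) (p : ℝ × ℝ) : ℝ :=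
  pdR (pdR f) p + (p.1)⁻¹ * pdR f p + pdZ (pdZ f) p

/-- The flat divergence of ℝ³ of an axisymmetric vector field (Wρ, Wz):
div W = ρ⁻¹ (ρ Wρ)_{,ρ} + Wz_{,z} = Wρ_{,ρ} + ρ⁻¹ Wρ + Wz_{,z}. -/
def divg (Wr Wz : ℝ × ℝ → ℝ) (p : ℝ × ℝ) : ℝ :=
  pdR Wr p + (p.1)⁻¹ * Wr p + pdZ Wz p

/-- The half-plane {ρ > 0} of (ρ, z), representing ℝ³ in cylindrical coordinates. -/
def HP : Set (ℝ × ℝ) := {p | 0 < p.1}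

/-- Ω_{ρ₀} = {ρ > ρ₀}, the exterior of the solid cylinder of radius ρ₀. -/
def Om (ρ₀ : ℝ) : Set (ℝ × ℝ) := {p | ρ₀ < p.1}

/-- ∫_{ℝ³} h dμ for an axisymmetric integrand h, where dμ = ρ dρ dz dφ. -/
def intR3 (h : ℝ × ℝ → ℝ) : ℝ := (2 * π) * ∫ p in HP, h p * p.1

/-- ∫_{Ω_{ρ₀}} h dμ for an axisymmetric integrand h. -/
def intOm (ρ₀ : ℝ) (h : ℝ × ℝ → ℝ) : ℝ := (2 * π) * ∫ p in Om ρ₀, h p * p.1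

/-- The mass functional M(v, Y) = (1/(32π)) ∫_{ℝ³} (|∂v|² + ρ⁻⁴ e^{−2v} |∂Y|²) dμ. -/
def MF (v Y : ℝ × ℝ → ℝ) : ℝ :=
  (1 / (32 * π)) *
    intR3 (fun p => gradSq v p + (p.1 ^ 4)⁻¹ * Real.exp (-2 * v p) * gradSq Y p)

/-- r = √(ρ² + z²). -/
def rr (p : ℝ × ℝ) : ℝ := Real.sqrt (p.1 ^ 2 + p.2 ^ 2)

/-- cos θ = z / r. -/
def cosT (p : ℝ × ℝ) : ℝ := p.2 / rr p

/-- sin²θ = ρ² / r². -/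
def sin2T (p : ℝ × ℝ) : ℝ := p.1 ^ 2 / (rr p) ^ 2

/-- r̃ = r + √|J|. -/
def rt (J : ℝ) (p : ℝ × ℝ) : ℝ := rr p + Real.sqrt |J|

/-- Σ = r̃² + |J| cos²θ. -/
def Sg (J : ℝ) (p : ℝ × ℝ) : ℝ := (rt J p) ^ 2 + |J| * (cosT p) ^ 2

/-- The extreme Kerr potential Y₀. -/
def Y0 (J : ℝ) (p : ℝ × ℝ) : ℝ :=
  2 * J * ((cosT p) ^ 3 - 3 * cosT p) - 2 * J ^ 2 * cosT p * (sin2T p) ^ 2 / Sg J p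

/-- The extreme Kerr Killing norm X₀. -/
def X0 (J : ℝ) (p : ℝ × ℝ) : ℝ :=
  (((rt J p) ^ 2 + |J|) ^ 2 - (rr p) ^ 2 * |J| * sin2T p) * sin2T p / Sg J p

/-- The extreme Kerr function v₀ = ln X₀ − 2 ln ρ, so that X₀ = ρ² e^{v₀}. -/
def v0 (J : ℝ) (p : ℝ × ℝ) : ℝ := Real.log (X0 J p) - 2 * Real.log p.1

/-- σ = √(r² + 1). -/
def sgm (p : ℝ × ℝ) : ℝ := Real.sqrt ((rr p) ^ 2 + 1)

/-- The pointwise weighted C¹ quantity σ^{−β}|f| + σ^{−β+1}|∂f|. -/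
def wFn (β : ℝ) (f : ℝ × ℝ → ℝ) (p : ℝ × ℝ) : ℝ :=
  sgm p ^ (-β) * |f p| + sgm p ^ (-β + 1) * Real.sqrt (gradSq f p)

/-- The weighted norm ‖f‖_{C¹_β(Ω)} = sup_Ω (σ^{−β}|f| + σ^{−β+1}|∂f|). -/
def C1norm (β : ℝ) (Ω : Set (ℝ × ℝ)) (f : ℝ × ℝ → ℝ) : ℝ :=
  sSup (wFn β f '' Ω)

/-- The Banach space 𝓑: pairs φ = (α, y) of axisymmetric C¹ functions with
y ≡ 0 on {ρ ≤ ρ₀} and finite norm ‖φ‖_𝓑 = ‖α‖_{C¹_β(ℝ³)} + ‖y‖_{C¹_β(Ω_{ρ₀})}. -/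
structure Bsp (ρ₀ β : ℝ) where
  a : ℝ × ℝ → ℝ
  y : ℝ × ℝ → ℝ
  ha : ContDiff ℝ 1 a
  hy : ContDiff ℝ 1 y
  hy0 : ∀ p : ℝ × ℝ, p.1 ≤ ρ₀ → y p = 0
  hba : BddAbove (wFn β a '' HP)
  hby : BddAbove (wFn β y '' Om ρ₀)

/-- The norm of 𝓑. -/
def Bnorm (ρ₀ β : ℝ) (φ : Bsp ρ₀ β) : ℝ :=
  C1norm β HP φ.a + C1norm β (Om ρ₀) φ.y

/-- i_φ(t) = M(u₀ + tφ) = M(v₀ + tα, Y₀ + ty). -/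
def iF (J ρ₀ β : ℝ) (φ : Bsp ρ₀ β) (t : ℝ) : ℝ :=
  MF (fun p => v0 J p + t * φ.a p) (fun p => Y0 J p + t * φ.y p)

/-- ‖α‖²_{H₁} = ∫_{ℝ³} |∂α|² dμ + ∫_{ℝ³} α² r⁻² dμ. -/
def H1sq (a : ℝ × ℝ → ℝ) : ℝ :=
  intR3 (fun p => gradSq a p) + intR3 (fun p => (a p) ^ 2 * ((rr p) ^ 2)⁻¹)

/-- ‖y‖²_{H₂} = ∫_{Ω_{ρ₀}} |∂y|² ρ⁻⁴ dμ + ∫_{Ω_{ρ₀}} y² ρ⁻⁶ dμ. -/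
def H2sq (ρ₀ : ℝ) (y : ℝ × ℝ → ℝ) : ℝ :=
  intOm ρ₀ (fun p => gradSq y p * (p.1 ^ 4)⁻¹) +
    intOm ρ₀ (fun p => (y p) ^ 2 * (p.1 ^ 6)⁻¹)

/-- ‖φ‖²_𝓗 = ‖α‖²_{H₁} + ‖y‖²_{H₂}. -/
def Hsq (ρ₀ β : ℝ) (φ : Bsp ρ₀ β) : ℝ := H1sq φ.a + H2sq ρ₀ φ.y

def Qf (s : ℝ) (q : ℝ × ℝ) : ℝ := (rr q + s) * (rr q + s) + s * s
def Af (s : ℝ) (q : ℝ × ℝ) : ℝ := Qf s q * Qf s q - s * s * (q.1 * q.1)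
def Bf (s : ℝ) (q : ℝ × ℝ) : ℝ := (rr q * rr q) * Qf s q - s * s * (q.1 * q.1)

lemma rr_pos {p : ℝ × ℝ} (hp : 0 < p.1) : 0 < rr p := by
  apply Real.sqrt_pos.2; positivity

lemma rr_sq (p : ℝ × ℝ) : rr p ^ 2 = p.1 ^ 2 + p.2 ^ 2 := by
  rw [rr, Real.sq_sqrt]; positivity

lemma le_rr {p : ℝ × ℝ} (hp : 0 < p.1) : p.1 ≤ rr p := by
  have h := rr_sq p
  nlinarith [rr_pos hp, sq_nonneg p.2]

lemma Qf_lb {s : ℝ} (hs : 0 < s) (q : ℝ × ℝ) : 2 * s * (rr q + s) ≤ Qf s q := by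
  have := sq_nonneg (rr q + s - s); unfold Qf; nlinarith

lemma Qf_lb' (s : ℝ) (q : ℝ × ℝ) : (rr q + s) * (rr q + s) ≤ Qf s q := by
  unfold Qf; nlinarith [sq_nonneg s]

lemma Af_lb {s : ℝ} (hs : 0 < s) {q : ℝ × ℝ} (hq : 0 < q.1) :
    3 / 4 * (Qf s q * Qf s q) ≤ Af s q := by
  have h1 := Qf_lb hs q
  have hr := rr_pos hq
  have hρr := le_rr hq
  have h2 : s * q.1 ≤ Qf s q / 2 := by nlinarith
  unfold Af; nlinarith [mul_pos hs hq]

lemma Af_pos {s : ℝ} (hs : 0 < s) {q : ℝ × ℝ} (hq : 0 < q.1) : 0 < Af s q := by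
  have h := Af_lb hs hq
  have hr := rr_pos hq
  have hQ : 0 < Qf s q := by unfold Qf; positivity
  nlinarith

lemma Bf_lb {s : ℝ} (hs : 0 < s) {q : ℝ × ℝ} (hq : 0 < q.1) :
    (rr q * rr q) * ((rr q + s) * (rr q + s)) ≤ Bf s q := by
  have h2 := rr_sq q
  unfold Bf Qf; nlinarith [sq_nonneg q.2]

lemma Bf_pos {s : ℝ} (hs : 0 < s) {q : ℝ × ℝ} (hq : 0 < q.1) : 0 < Bf s q := by
  have h := Bf_lb hs hq
  have hr := rr_pos hq
  nlinarith [mul_pos hr hs]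

lemma X0_eq {J : ℝ} (hJ : J ≠ 0) {q : ℝ × ℝ} (hq : 0 < q.1) :
    X0 J q = q.1 ^ 2 * Af (Real.sqrt |J|) q / Bf (Real.sqrt |J|) q := by
  set s := Real.sqrt |J| with hs_def
  have hs : 0 < s := Real.sqrt_pos.2 (abs_pos.2 hJ)
  have hJs : |J| = s * s := (Real.mul_self_sqrt (abs_nonneg J)).symm
  have hr := rr_pos hq
  have hr2 := rr_sq q
  have hB := Bf_pos hs hq
  have hSg : Sg J q = Bf s q / (rr q)^2 := by
    unfold Sg rt cosT Bf Qf
    rw [hJs, Real.sqrt_mul_self hs.le]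
    field_simp
    nlinarith [hr2]
  have hSgpos : 0 < Sg J q := by rw [hSg]; positivity
  unfold X0 rt sin2T
  rw [hJs, hSg, Real.sqrt_mul_self hs.le]
  unfold Af Qf
  field_simp

lemma v0_eq {J : ℝ} (hJ : J ≠ 0) {q : ℝ × ℝ} (hq : 0 < q.1) :
    v0 J q = Real.log (Af (Real.sqrt |J|) q) - Real.log (Bf (Real.sqrt |J|) q) := by
  set s := Real.sqrt |J| with hs_def
  have hs : 0 < s := Real.sqrt_pos.2 (abs_pos.2 hJ)
  have hA := Af_pos hs hq
  have hB := Bf_pos hs hq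
  unfold v0
  rw [X0_eq hJ hq]
  rw [Real.log_div (by positivity) hB.ne', Real.log_mul (by positivity) hA.ne',
    Real.log_pow]
  push_cast
  ring

lemma logX0_eq {J : ℝ} (hJ : J ≠ 0) {q : ℝ × ℝ} (hq : 0 < q.1) :
    Real.log (X0 J q) = Real.log (Af (Real.sqrt |J|) q) - Real.log (Bf (Real.sqrt |J|) q)
      + 2 * Real.log q.1 := by
  have h := v0_eq hJ hq
  unfold v0 at h
  linarith

def Lmap (a b : ℝ) : ℝ × ℝ →L[ℝ] ℝ :=
  a • ContinuousLinearMap.fst ℝ ℝ ℝ + b • ContinuousLinearMap.snd ℝ ℝ ℝ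

@[simp] lemma Lmap_apply (a b : ℝ) (v : ℝ × ℝ) : Lmap a b v = a * v.1 + b * v.2 := by
  simp [Lmap, smul_eq_mul]

lemma hasFDerivAt_rr {p : ℝ × ℝ} (hp : 0 < p.1) :
    HasFDerivAt rr (Lmap (p.1 / rr p) (p.2 / rr p)) p := by
  have h0 : p.1 ^ 2 + p.2 ^ 2 ≠ 0 := by positivity
  have hfst : HasFDerivAt (fun q : ℝ × ℝ => q.1) (ContinuousLinearMap.fst ℝ ℝ ℝ) p :=
    hasFDerivAt_fst
  have hsnd : HasFDerivAt (fun q : ℝ × ℝ => q.2) (ContinuousLinearMap.snd ℝ ℝ ℝ) p :=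
    hasFDerivAt_snd
  have hsum : HasFDerivAt (fun q : ℝ × ℝ => q.1 ^ 2 + q.2 ^ 2) (Lmap (2 * p.1) (2 * p.2)) p := by
    have h1 : HasFDerivAt (fun q : ℝ × ℝ => q.1 * q.1 + q.2 * q.2) _ p :=
      (hfst.mul hfst).add (hsnd.mul hsnd)
    have heq : (fun q : ℝ × ℝ => q.1 * q.1 + q.2 * q.2) = fun q : ℝ × ℝ => q.1 ^ 2 + q.2 ^ 2 := by
      funext q; ring
    rw [heq] at h1
    refine h1.congr_fderiv ?_
    ext v <;> simp [Lmap, smul_eq_mul] <;> ring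
  have hs := (Real.hasDerivAt_sqrt h0).comp_hasFDerivAt p hsum
  have h2 : HasFDerivAt rr ((1 / (2 * Real.sqrt (p.1 ^ 2 + p.2 ^ 2))) • Lmap (2 * p.1) (2 * p.2)) p := hs
  convert h2 using 1
  have hrne : rr p ≠ 0 := (rr_pos hp).ne'
  ext v <;>
    simp [Lmap, smul_eq_mul, rr] <;>
    · rw [show Real.sqrt (p.1 ^ 2 + p.2 ^ 2) = rr p from rfl]; field_simp

lemma hasFDerivAt_Af (s : ℝ) {p : ℝ × ℝ} (hp : 0 < p.1) :
    HasFDerivAt (Af s)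
      (Lmap (2 * Qf s p * (2 * (rr p + s)) * (p.1 / rr p) - 2 * (s * s) * p.1)
            (2 * Qf s p * (2 * (rr p + s)) * (p.2 / rr p))) p := by
  have hrr := hasFDerivAt_rr hp
  have hrs := hrr.add_const s
  have hQ := (hrs.mul hrs).add_const (s * s)
  have hfst : HasFDerivAt (fun q : ℝ × ℝ => q.1) (ContinuousLinearMap.fst ℝ ℝ ℝ) p :=
    hasFDerivAt_fst
  have hA := (hQ.mul hQ).sub ((hfst.mul hfst).const_mul (s * s))
  refine hA.congr_fderiv ?_
  ext v <;> simp [Lmap, smul_eq_mul, Qf] <;> ring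

lemma hasFDerivAt_Bf (s : ℝ) {p : ℝ × ℝ} (hp : 0 < p.1) :
    HasFDerivAt (Bf s)
      (Lmap ((2 * rr p * Qf s p + rr p * rr p * (2 * (rr p + s))) * (p.1 / rr p)
              - 2 * (s * s) * p.1)
            ((2 * rr p * Qf s p + rr p * rr p * (2 * (rr p + s))) * (p.2 / rr p))) p := by
  have hrr := hasFDerivAt_rr hp
  have hrs := hrr.add_const s
  have hQ := (hrs.mul hrs).add_const (s * s)
  have hfst : HasFDerivAt (fun q : ℝ × ℝ => q.1) (ContinuousLinearMap.fst ℝ ℝ ℝ) p :=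
    hasFDerivAt_fst
  have hB := ((hrr.mul hrr).mul hQ).sub ((hfst.mul hfst).const_mul (s * s))
  refine hB.congr_fderiv ?_
  ext v <;> simp [Lmap, smul_eq_mul, Qf] <;> ring


section bounds
variable {s : ℝ} {p : ℝ × ℝ}

lemma hT1 (hs : 0 < s) (hp : 0 < p.1) :
    (Af s p)⁻¹ * (2 * Qf s p * (2 * (rr p + s))) ≤ 6 / rr p := by
  have hr := rr_pos hp
  have hρr := le_rr hp
  have hQ2 := Qf_lb' s p
  have hA34 := Af_lb hs hp
  have hApos := Af_pos hs hp
  have hQpos : 0 < Qf s p := by unfold Qf; positivity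
  rw [inv_mul_eq_div, div_le_div_iff₀ hApos hr]
  nlinarith [mul_le_mul_of_nonneg_left hQ2 (by positivity : (0:ℝ) ≤ 4 * Qf s p),
    mul_le_mul_of_nonneg_left hρr (by positivity : (0:ℝ) ≤ 4 * Qf s p * (rr p + s))]

lemma hT2 (hs : 0 < s) (hp : 0 < p.1) :
    (Af s p)⁻¹ * (2 * (s * s) * p.1) ≤ 1 / rr p := by
  have hr := rr_pos hp
  have hρr := le_rr hp
  have hQ1 := Qf_lb hs p
  have hA34 := Af_lb hs hp
  have hApos := Af_pos hs hp
  have hQpos : 0 < Qf s p := by unfold Qf; positivity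
  have hsr : 2 * s * rr p ≤ Qf s p := by nlinarith
  rw [inv_mul_eq_div, div_le_div_iff₀ hApos hr]
  nlinarith [mul_le_mul hsr hsr (by positivity) hQpos.le,
    mul_le_mul_of_nonneg_left hρr (by positivity : (0:ℝ) ≤ s * s * rr p)]

lemma hT3 (hs : 0 < s) (hp : 0 < p.1) :
    (Bf s p)⁻¹ * (2 * rr p * Qf s p + rr p * rr p * (2 * (rr p + s))) ≤ 6 / rr p := by
  have hr := rr_pos hp
  have hρr := le_rr hp
  have hBlb := Bf_lb hs hp
  have hBpos := Bf_pos hs hp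
  have hQu : Qf s p ≤ 2 * ((rr p + s) * (rr p + s)) := by
    unfold Qf; nlinarith [mul_pos hr hs, sq_nonneg (rr p)]
  rw [inv_mul_eq_div, div_le_div_iff₀ hBpos hr]
  nlinarith [mul_le_mul_of_nonneg_left hQu (by positivity : (0:ℝ) ≤ 2 * rr p * rr p),
    mul_le_mul_of_nonneg_left hρr
      (by positivity : (0:ℝ) ≤ 2 * rr p * ((rr p + s) * (rr p + s)))]

lemma hT4 (hs : 0 < s) (hp : 0 < p.1) :
    (Bf s p)⁻¹ * (2 * (s * s) * p.1) ≤ 2 / rr p := by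
  have hr := rr_pos hp
  have hρr := le_rr hp
  have hBlb := Bf_lb hs hp
  have hBpos := Bf_pos hs hp
  rw [inv_mul_eq_div, div_le_div_iff₀ hBpos hr]
  nlinarith [mul_le_mul_of_nonneg_left hρr (by positivity : (0:ℝ) ≤ s * s * rr p),
    mul_pos hr hs, sq_nonneg (rr p - s), mul_pos hr hr]

lemma abound (hs : 0 < s) (hp : 0 < p.1) :
    |(Af s p)⁻¹ * (2 * Qf s p * (2 * (rr p + s)) * (p.1 / rr p) - 2 * (s * s) * p.1)
      - (Bf s p)⁻¹ * ((2 * rr p * Qf s p + rr p * rr p * (2 * (rr p + s))) * (p.1 / rr p)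
          - 2 * (s * s) * p.1)| ≤ 8 / rr p := by
  have hr := rr_pos hp
  have hρr := le_rr hp
  have hApos := Af_pos hs hp
  have hBpos := Bf_pos hs hp
  have hQpos : 0 < Qf s p := by unfold Qf; positivity
  have hu0 : 0 ≤ p.1 / rr p := by positivity
  have hu1 : p.1 / rr p ≤ 1 := (div_le_one hr).2 hρr
  have h1 := hT1 hs hp
  have h2 := hT2 hs hp
  have h3 := hT3 hs hp
  have h4 := hT4 hs hp
  have hT1a : 0 ≤ (Af s p)⁻¹ * (2 * Qf s p * (2 * (rr p + s))) := by positivity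
  have hT2a : 0 ≤ (Af s p)⁻¹ * (2 * (s * s) * p.1) := by positivity
  have hT3a : 0 ≤ (Bf s p)⁻¹ * (2 * rr p * Qf s p + rr p * rr p * (2 * (rr p + s))) := by
    positivity
  have hT4a : 0 ≤ (Bf s p)⁻¹ * (2 * (s * s) * p.1) := by positivity
  have ha : (Af s p)⁻¹ * (2 * Qf s p * (2 * (rr p + s)) * (p.1 / rr p) - 2 * (s * s) * p.1)
      - (Bf s p)⁻¹ * ((2 * rr p * Qf s p + rr p * rr p * (2 * (rr p + s))) * (p.1 / rr p)
          - 2 * (s * s) * p.1)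
      = ((Af s p)⁻¹ * (2 * Qf s p * (2 * (rr p + s)))) * (p.1 / rr p)
        - (Af s p)⁻¹ * (2 * (s * s) * p.1)
        - ((Bf s p)⁻¹ * (2 * rr p * Qf s p + rr p * rr p * (2 * (rr p + s)))) * (p.1 / rr p)
        + (Bf s p)⁻¹ * (2 * (s * s) * p.1) := by ring
  rw [ha, abs_le]
  have hrinv : (0:ℝ) ≤ (rr p)⁻¹ := by positivity
  simp only [div_eq_mul_inv] at h1 h2 h3 h4 hu0 hu1 ⊢
  constructor
  · have k1 := mul_nonneg hT1a hu0
    have k3 := mul_le_of_le_one_right hT3a hu1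
    have k3' := mul_nonneg hT3a hu0
    nlinarith
  · have k1 := mul_le_of_le_one_right hT1a hu1
    have k3 := mul_nonneg hT3a hu0
    nlinarith

lemma bbound (hs : 0 < s) (hp : 0 < p.1) :
    |(Af s p)⁻¹ * (2 * Qf s p * (2 * (rr p + s)) * (p.2 / rr p))
      - (Bf s p)⁻¹ * ((2 * rr p * Qf s p + rr p * rr p * (2 * (rr p + s))) * (p.2 / rr p))|
      ≤ 6 / rr p := by
  have hr := rr_pos hp
  have hApos := Af_pos hs hp
  have hBpos := Bf_pos hs hp
  have hQpos : 0 < Qf s p := by unfold Qf; positivity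
  have h1 := hT1 hs hp
  have h3 := hT3 hs hp
  have hT1a : 0 ≤ (Af s p)⁻¹ * (2 * Qf s p * (2 * (rr p + s))) := by positivity
  have hT3a : 0 ≤ (Bf s p)⁻¹ * (2 * rr p * Qf s p + rr p * rr p * (2 * (rr p + s))) := by
    positivity
  have hzr : |p.2| ≤ rr p := by
    rw [← Real.sqrt_sq_eq_abs, ← Real.sqrt_sq hr.le]
    exact Real.sqrt_le_sqrt (by nlinarith [rr_sq p, sq_nonneg p.1])
  have hw1 : |p.2 / rr p| ≤ 1 := by
    rw [abs_div, abs_of_pos hr]; exact (div_le_one hr).2 hzr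
  have hb : (Af s p)⁻¹ * (2 * Qf s p * (2 * (rr p + s)) * (p.2 / rr p))
      - (Bf s p)⁻¹ * ((2 * rr p * Qf s p + rr p * rr p * (2 * (rr p + s))) * (p.2 / rr p))
      = ((Af s p)⁻¹ * (2 * Qf s p * (2 * (rr p + s)))
          - (Bf s p)⁻¹ * (2 * rr p * Qf s p + rr p * rr p * (2 * (rr p + s)))) * (p.2 / rr p) := by
    ring
  rw [hb, abs_mul]
  calc |(Af s p)⁻¹ * (2 * Qf s p * (2 * (rr p + s)))
          - (Bf s p)⁻¹ * (2 * rr p * Qf s p + rr p * rr p * (2 * (rr p + s)))| * |p.2 / rr p|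
      ≤ (6 / rr p) * 1 := by
        apply mul_le_mul _ hw1 (abs_nonneg _) (by positivity)
        rw [abs_le]; constructor <;> linarith
    _ = 6 / rr p := mul_one _

end bounds

lemma key {J : ℝ} (hJ : J ≠ 0) {p : ℝ × ℝ} (hp : 0 < p.1) :
    ∃ a b : ℝ, pdR (v0 J) p = a ∧ pdZ (v0 J) p = b ∧
      pdR (fun q => Real.log (X0 J q)) p = a + 2 / p.1 ∧
      pdZ (fun q => Real.log (X0 J q)) p = b ∧
      |a| ≤ 8 / rr p ∧ |b| ≤ 6 / rr p := by
  set s := Real.sqrt |J| with hs_def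
  have hs : 0 < s := Real.sqrt_pos.2 (abs_pos.2 hJ)
  have hr := rr_pos hp
  have hApos := Af_pos hs hp
  have hBpos := Bf_pos hs hp
  have hDA := hasFDerivAt_Af s hp
  have hDB := hasFDerivAt_Bf s hp
  have hv : HasFDerivAt (fun q => Real.log (Af s q) - Real.log (Bf s q))
      ((Af s p)⁻¹ • (Lmap (2 * Qf s p * (2 * (rr p + s)) * (p.1 / rr p) - 2 * (s * s) * p.1)
            (2 * Qf s p * (2 * (rr p + s)) * (p.2 / rr p)))
        - (Bf s p)⁻¹ • (Lmap ((2 * rr p * Qf s p + rr p * rr p * (2 * (rr p + s))) * (p.1 / rr p)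
              - 2 * (s * s) * p.1)
            ((2 * rr p * Qf s p + rr p * rr p * (2 * (rr p + s))) * (p.2 / rr p)))) p :=
    (hDA.log hApos.ne').sub (hDB.log hBpos.ne')
  have hmem : {q : ℝ × ℝ | 0 < q.1} ∈ nhds p :=
    (isOpen_lt continuous_const continuous_fst).mem_nhds hp
  have hEqv : v0 J =ᶠ[nhds p] fun q => Real.log (Af s q) - Real.log (Bf s q) :=
    Filter.eventuallyEq_of_mem hmem fun q hq => v0_eq hJ hq
  have hv0 := hv.congr_of_eventuallyEq hEqv
  -- log X0
  have hlfst : HasFDerivAt (fun q : ℝ × ℝ => Real.log q.1)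
      ((p.1)⁻¹ • ContinuousLinearMap.fst ℝ ℝ ℝ) p :=
    HasFDerivAt.log hasFDerivAt_fst hp.ne'
  have hlx' := hv.add (hlfst.const_mul 2)
  have hEql : (fun q => Real.log (X0 J q)) =ᶠ[nhds p]
      fun q => (Real.log (Af s q) - Real.log (Bf s q)) + 2 * Real.log q.1 :=
    Filter.eventuallyEq_of_mem hmem fun q hq => by
      have := logX0_eq hJ hq; simpa [add_assoc] using this
  have hlx := hlx'.congr_of_eventuallyEq hEql
  refine ⟨(Af s p)⁻¹ * (2 * Qf s p * (2 * (rr p + s)) * (p.1 / rr p) - 2 * (s * s) * p.1)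
      - (Bf s p)⁻¹ * ((2 * rr p * Qf s p + rr p * rr p * (2 * (rr p + s))) * (p.1 / rr p)
          - 2 * (s * s) * p.1),
    (Af s p)⁻¹ * (2 * Qf s p * (2 * (rr p + s)) * (p.2 / rr p))
      - (Bf s p)⁻¹ * ((2 * rr p * Qf s p + rr p * rr p * (2 * (rr p + s))) * (p.2 / rr p)),
    ?_, ?_, ?_, ?_, ?_, ?_⟩
  · show (fderiv ℝ (v0 J) p) (1, 0) = _
    rw [hv0.fderiv]; simp [smul_eq_mul]
  · show (fderiv ℝ (v0 J) p) (0, 1) = _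
    rw [hv0.fderiv]; simp [smul_eq_mul]
  · show (fderiv ℝ (fun q => Real.log (X0 J q)) p) (1, 0) = _
    rw [hlx.fderiv]; simp [smul_eq_mul]; field_simp
  · show (fderiv ℝ (fun q => Real.log (X0 J q)) p) (0, 1) = _
    rw [hlx.fderiv]; simp [smul_eq_mul]
  · exact abound hs hp
  · exact bbound hs hp

/-- There exists C₃' > 0, depending only on J, such that
|∂v₀|² ≤ C₃' r⁻² at every point with ρ > 0; consequently |∂ ln X₀|² ≤ C₃ ρ⁻² with
C₃ = C₃' + 4 at every point with ρ > 0. -/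
theorem extremeKerr_v0_gradient_bound (J : ℝ) (hJ : J ≠ 0) :
    ∃ C₃' > (0 : ℝ),
      (∀ p : ℝ × ℝ, 0 < p.1 → gradSq (v0 J) p ≤ C₃' * ((rr p) ^ 2)⁻¹) ∧
      ∀ p : ℝ × ℝ, 0 < p.1 →
        gradSq (fun q => Real.log (X0 J q)) p ≤ (C₃' + 4) * (p.1 ^ 2)⁻¹ := by
  refine ⟨136, by norm_num, ?_, ?_⟩
  · intro p hp
    obtain ⟨a, b, haR, hbZ, _, _, ha, hb⟩ := key hJ hp
    have hr := rr_pos hp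
    have hinv : (0:ℝ) ≤ ((rr p) ^ 2)⁻¹ := by positivity
    have ha2 : a ^ 2 ≤ 64 * ((rr p) ^ 2)⁻¹ := by
      have h8 : (8 / rr p) ^ 2 = 64 * ((rr p) ^ 2)⁻¹ := by
        rw [div_pow]; norm_num [div_eq_mul_inv]
      calc a ^ 2 = |a| ^ 2 := (sq_abs a).symm
        _ ≤ (8 / rr p) ^ 2 := pow_le_pow_left₀ (abs_nonneg a) ha 2
        _ = _ := h8
    have hb2 : b ^ 2 ≤ 36 * ((rr p) ^ 2)⁻¹ := by
      have h6 : (6 / rr p) ^ 2 = 36 * ((rr p) ^ 2)⁻¹ := by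
        rw [div_pow]; norm_num [div_eq_mul_inv]
      calc b ^ 2 = |b| ^ 2 := (sq_abs b).symm
        _ ≤ (6 / rr p) ^ 2 := pow_le_pow_left₀ (abs_nonneg b) hb 2
        _ = _ := h6
    unfold gradSq
    rw [show pdR (v0 J) p = a from haR, show pdZ (v0 J) p = b from hbZ]
    linarith
  · intro p hp
    obtain ⟨a, b, _, _, hlR, hlZ, ha, hb⟩ := key hJ hp
    have hr := rr_pos hp
    have hρr := le_rr hp
    have hpinv : (0:ℝ) ≤ (p.1)⁻¹ := by positivity
    have h1 : 8 / rr p ≤ 8 / p.1 :=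
      div_le_div_of_nonneg_left (by norm_num) hp hρr
    have haa := abs_le.1 ha
    have hab : |a + 2 / p.1| ≤ 10 / p.1 := by
      rw [abs_le]
      simp only [div_eq_mul_inv] at h1 haa ⊢
      constructor <;> nlinarith
    have ha2 : (a + 2 / p.1) ^ 2 ≤ 100 * (p.1 ^ 2)⁻¹ := by
      have h10 : (10 / p.1) ^ 2 = 100 * (p.1 ^ 2)⁻¹ := by
        rw [div_pow]; norm_num [div_eq_mul_inv]
      calc (a + 2 / p.1) ^ 2 = |a + 2 / p.1| ^ 2 := (sq_abs _).symm
        _ ≤ (10 / p.1) ^ 2 := pow_le_pow_left₀ (abs_nonneg _) hab 2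
        _ = _ := h10
    have hb2 : b ^ 2 ≤ 36 * (p.1 ^ 2)⁻¹ := by
      have h6 : (6 / rr p) ^ 2 = 36 * ((rr p) ^ 2)⁻¹ := by
        rw [div_pow]; norm_num [div_eq_mul_inv]
      have hmono : ((rr p) ^ 2)⁻¹ ≤ (p.1 ^ 2)⁻¹ := by
        apply inv_anti₀ (by positivity)
        nlinarith
      calc b ^ 2 = |b| ^ 2 := (sq_abs b).symm
        _ ≤ (6 / rr p) ^ 2 := pow_le_pow_left₀ (abs_nonneg b) hb 2
        _ = 36 * ((rr p) ^ 2)⁻¹ := h6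
        _ ≤ 36 * (p.1 ^ 2)⁻¹ := by linarith
    have hppos : (0:ℝ) ≤ (p.1 ^ 2)⁻¹ := by positivity
    unfold gradSq
    rw [show pdR (fun q => Real.log (X0 J q)) p = a + 2 / p.1 from hlR,
      show pdZ (fun q => Real.log (X0 J q)) p = b from hlZ]
    linarith
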